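/- Let α and Z be types, let f : α → Z be an encoder, and let D assign to each z ∈ Z a probability mass function D(z) on α (the decoder). Suppose x₁, …, xₙ are pairwise distinct elements of α (n ≥ 1) with f(x₁) = f(x₂) = ⋯ = f(xₙ). If D(f(xᵢ))(xᵢ) > 0 for every i, then the reconstruction negative log-likelihood satisfies −Σ_{i=1}^n log D(f(xᵢ))(xᵢ) ≥ n·log n. -/

import Mathlib

/-- Non-degeneracy core: if an encoder `f` collapses `n ≥ 1` pairwise distinct inputs to the
same latent code, and the decoder `D` assigns to each latent code a probability mass function,
then the reconstruction negative log-likelihood is at least `n·log n`. -/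
theorem collapse_reconstruction_lower_bound {α Z : Type*}
    (f : α → Z) (D : Z → α → ℝ)
    (hD_nonneg : ∀ z a, 0 ≤ D z a) (hD_sum : ∀ z, HasSum (D z) 1)
    (n : ℕ) (hn : 1 ≤ n) (x : Fin n → α) (hx : Function.Injective x)
    (hcollapse : ∀ i j, f (x i) = f (x j))
    (hpos : ∀ i, 0 < D (f (x i)) (x i)) :
    -(∑ i, Real.log (D (f (x i)) (x i))) ≥ n * Real.log n := by
  classical
  set p : Fin n → ℝ := fun i => D (f (x i)) (x i) with hp
  have hn0 : (0:ℝ) < n := by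
    have : (1:ℝ) ≤ n := by exact_mod_cast hn
    linarith
  set z₀ : Z := f (x ⟨0, hn⟩) with hz0
  have hpz : ∀ i, p i = D z₀ (x i) := fun i => by
    simp only [hp, hz0, hcollapse i ⟨0, hn⟩]
  -- the finite sum of the p i is at most 1
  have hsum1 : ∑ i, p i ≤ 1 := by
    have h1 : ∑ i, p i = ∑ a ∈ Finset.univ.image x, D z₀ a := by
      rw [Finset.sum_image (fun a _ b _ h => hx h)]
      exact Finset.sum_congr rfl fun i _ => hpz i
    rw [h1]
    exact sum_le_hasSum _ (fun a _ => hD_nonneg z₀ a) (hD_sum z₀)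
  -- AM-GM with equal weights 1/n
  have hw : ∑ _i : Fin n, (1 / (n:ℝ)) = 1 := by
    simp [Finset.sum_const, Finset.card_univ]
    field_simp
  have hgm : ∏ i, p i ^ (1 / (n:ℝ)) ≤ ∑ i, (1 / (n:ℝ)) * p i :=
    Real.geom_mean_le_arith_mean_weighted Finset.univ _ _
      (fun i _ => by positivity) hw (fun i _ => (hpos i).le)
  have hrhs : ∑ i, (1 / (n:ℝ)) * p i ≤ 1 / n := by
    rw [← Finset.mul_sum]
    rw [div_mul_eq_mul_div, one_mul, div_le_div_iff₀ hn0 hn0, one_mul]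
    calc (∑ i, p i) * n ≤ 1 * n := by
          exact mul_le_mul_of_nonneg_right hsum1 hn0.le
      _ = n := one_mul _
  have hprodpos : 0 < ∏ i, p i ^ (1 / (n:ℝ)) :=
    Finset.prod_pos fun i _ => Real.rpow_pos_of_pos (hpos i) _
  have hlog : Real.log (∏ i, p i ^ (1 / (n:ℝ))) ≤ Real.log (1 / n) :=
    Real.log_le_log hprodpos (hgm.trans hrhs)
  have hlogprod : Real.log (∏ i, p i ^ (1 / (n:ℝ)))
      = (1 / (n:ℝ)) * ∑ i, Real.log (p i) := by
    rw [Real.log_prod (fun i _ => (Real.rpow_pos_of_pos (hpos i) _).ne')]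
    rw [Finset.mul_sum]
    exact Finset.sum_congr rfl fun i _ => Real.log_rpow (hpos i) _
  have hlog1n : Real.log (1 / (n:ℝ)) = -Real.log n := by
    rw [one_div, Real.log_inv]
  rw [hlogprod, hlog1n] at hlog
  have := mul_le_mul_of_nonneg_left hlog hn0.le
  rw [← mul_assoc, mul_one_div, div_self hn0.ne', one_mul] at this
  linarith
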